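/- arXiv:0906.2014 — 3 statements merged into one kernel-verified Lean document; each statement's English description precedes it below -/
import Mathlib

section
/- Let g be a finite-dimensional simple Lie algebra over ℂ and A a commutative associative unital ℂ-algebra. Then every Lie ideal of the Lie algebra g ⊗ A (with bracket [x⊗a, y⊗b] = [x,y]⊗ab) is of the form g ⊗ S for some ideal S of A. -/
open TensorProduct

set_option maxHeartbeats 1000000
set_option synthInstance.maxHeartbeats 200000
set_option linter.unusedSectionVars false

section Burnside

variable (g : Type*) [LieRing g] [LieAlgebra ℂ g]
  [FiniteDimensional ℂ g] [LieAlgebra.IsSimple ℂ g]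

local notation "B" => Algebra.adjoin ℂ (Set.range (LieAlgebra.ad ℂ g))

lemma g_nontrivial : Nontrivial g := by
  by_contra h
  rw [not_nontrivial_iff_subsingleton] at h
  exact LieAlgebra.IsSimple.non_abelian (R := ℂ) (L := g)
    { trivial := fun x y => Subsingleton.elim _ _ }

lemma simpleModB : IsSimpleModule (B) g := by
  have := g_nontrivial g
  have : Nontrivial (Submodule (B) g) := Submodule.nontrivial_iff _ |>.mpr this
  refine (isSimpleModule_iff _ _).mpr ?_
  constructor
  intro N
  · 
    let J : LieIdeal ℂ g :=
      { carrier := N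
        add_mem' := fun ha hb => N.add_mem ha hb
        zero_mem' := N.zero_mem
        smul_mem' := fun c m hm => by
          have : (algebraMap ℂ (B)) c • m = c • m := by
            show ((algebraMap ℂ (B)) c : Module.End ℂ g) m = c • m
            rw [Subalgebra.coe_algebraMap]
            simp [Module.algebraMap_end_apply]
          exact this ▸ N.smul_mem _ hm
        lie_mem := fun {x m} hm => by
          have hx : (LieAlgebra.ad ℂ g) x ∈ B := Algebra.subset_adjoin ⟨x, rfl⟩
          have : (⟨(LieAlgebra.ad ℂ g) x, hx⟩ : B) • m = ⁅x, m⁆ := rfl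
          exact this ▸ N.smul_mem _ hm }
    rcases (inferInstance : IsSimpleOrder (LieIdeal ℂ g)).eq_bot_or_eq_top J with h | h
    · left
      ext m
      have : m ∈ N ↔ m ∈ J := Iff.rfl
      rw [Submodule.mem_bot, this, h]
      exact LieSubmodule.mem_bot m
    · right
      ext m
      simp only [Submodule.mem_top, iff_true]
      show m ∈ J
      rw [h]
      exact LieSubmodule.mem_top m

lemma schurB (f : g →ₗ[B] g) : ∃ c : ℂ, ∀ m, f m = c • m := by
  have := g_nontrivial g
  have hsimple := simpleModB g
  have : IsSimpleModule (B) g := hsimple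
  -- f as ℂ-linear map
  let f' : g →ₗ[ℂ] g :=
    { toFun := f
      map_add' := f.map_add
      map_smul' := fun c m => by
        have : (algebraMap ℂ (B)) c • m = c • m := by
          show ((algebraMap ℂ (B)) c : Module.End ℂ g) m = c • m
          rw [Subalgebra.coe_algebraMap]
          simp [Module.algebraMap_end_apply]
        simp only [RingHom.id_apply]
        rw [← this, f.map_smul]
        show ((algebraMap ℂ (B)) c : Module.End ℂ g) (f m) = c • f m
        rw [Subalgebra.coe_algebraMap]
        simp [Module.algebraMap_end_apply] }
  obtain ⟨c, hc⟩ := Module.End.exists_eigenvalue f'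
  obtain ⟨v, hv⟩ := hc.exists_hasEigenvector
  refine ⟨c, ?_⟩
  let h0 : g →ₗ[B] g :=
    { toFun := fun m => f m - c • m
      map_add' := fun x y => by
        show f (x + y) - c • (x + y) = (f x - c • x) + (f y - c • y)
        rw [f.map_add, smul_add]; abel
      map_smul' := fun b m => by
        simp only [RingHom.id_apply]
        rw [f.map_smul, smul_sub]
        congr 1
        exact ((b : Module.End ℂ g).map_smul c m).symm }
  have hv0 : h0 v = 0 := by
    show f v - c • v = 0
    have : f' v = c • v := hv.apply_eq_smul
    rw [show f v = f' v from rfl, this, sub_self]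
  rcases LinearMap.injective_or_eq_zero h0 with hinj | hz
  · exfalso
    have : v = 0 := hinj (by rw [hv0, map_zero])
    exact hv.2 this
  · intro m
    have h1 : f m - c • m = 0 := by
      have := LinearMap.congr_fun hz m; exact this
    exact sub_eq_zero.mp h1
    

lemma semisimpleV (n : ℕ) : IsSemisimpleModule (B) (Fin n → g) := by
  have hsimple := simpleModB g
  have : IsSimpleModule (B) g := hsimple
  apply isSemisimpleModule_of_isSemisimpleModule_submodule'
    (p := fun i : Fin n => LinearMap.range (LinearMap.single (B) (fun _ : Fin n => g) i))
  · intro i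
    have hinj : Function.Injective (LinearMap.single (B) (fun _ : Fin n => g) i) := by
      rw [LinearMap.coe_single]
      exact Pi.single_injective i
    exact IsSemisimpleModule.congr
      (LinearEquiv.ofInjective (LinearMap.single (B) (fun _ : Fin n => g) i) hinj).symm
  · exact LinearMap.iSup_range_single _ _

lemma burnside (f : Module.End ℂ g) : f ∈ B := by
  have := g_nontrivial g
  have : IsSimpleModule (B) g := simpleModB g
  set n := Module.finrank ℂ g with hn
  let bC : Module.Basis (Fin n) ℂ g := Module.finBasis ℂ g
  have : IsSemisimpleModule (B) (Fin n → g) := semisimpleV g n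
  let v : Fin n → g := fun i => bC i
  set N : Submodule (B) (Fin n → g) := Submodule.span (B) {v} with hN
  obtain ⟨P, hP⟩ := exists_isCompl N
  let π : (Fin n → g) →ₗ[B] (Fin n → g) :=
    N.subtype ∘ₗ (N.projectionOnto P hP)
  have hrange : ∀ w, π w ∈ N := fun w => (N.projectionOnto P hP w).2
  have hπv : π v = v := by
    show (N.subtype) (N.projectionOnto P hP v) = v
    rw [Submodule.linearProjOfIsCompl_apply_left hP ⟨v, Submodule.mem_span_singleton_self v⟩]
    rfl
  let pij : Fin n → Fin n → (g →ₗ[B] g) := fun i j =>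
    (LinearMap.proj i) ∘ₗ π ∘ₗ (LinearMap.single (B) (fun _ : Fin n => g) j)
  choose c hc using fun i j => schurB g (pij i j)
  have key : ∀ w : Fin n → g, ∀ i, π w i = ∑ j, c i j • w j := by
    intro w i
    have hw : w = ∑ j, LinearMap.single (B) (fun _ : Fin n => g) j (w j) := by
      simpa using (Finset.univ_sum_single w).symm
    calc π w i = (∑ j, π (LinearMap.single (B) (fun _ : Fin n => g) j (w j))) i := by
          rw [← map_sum, ← hw]
      _ = ∑ j, π (LinearMap.single (B) (fun _ : Fin n => g) j (w j)) i := by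
          rw [Finset.sum_apply]
      _ = ∑ j, pij i j (w j) := rfl
      _ = ∑ j, c i j • w j := by simp_rw [hc]
  have hfv : (fun i => f (v i)) ∈ N := by
    have : π (fun i => f (v i)) = fun i => f (v i) := by
      funext i
      rw [key]
      have : ∑ j, c i j • f (v j) = f (∑ j, c i j • v j) := by
        rw [map_sum]; simp_rw [map_smul]
      rw [this, ← key, hπv]
    rw [← this]; exact hrange _
  obtain ⟨β, hβ⟩ := Submodule.mem_span_singleton.mp hfv
  have hβf : (β : Module.End ℂ g) = f := by
    apply bC.ext
    intro i
    have := congrFun hβ i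
    exact this
  exact hβf ▸ β.2

end Burnside

/-- The current Lie algebra `g ⊗ A` (realized as `A ⊗[ℂ] g`) is a complex Lie algebra. -/
noncomputable instance currentLieAlgebra (A : Type*) [CommRing A] [Algebra ℂ A]
    (g : Type*) [LieRing g] [LieAlgebra ℂ g] : LieAlgebra ℂ (A ⊗[ℂ] g) where
  lie_smul t x y := by
    rw [← algebraMap_smul A t y, lie_smul, algebraMap_smul]

theorem stmt0 (g : Type*) [LieRing g] [LieAlgebra ℂ g]
    [FiniteDimensional ℂ g] [LieAlgebra.IsSimple ℂ g]
    (A : Type*) [CommRing A] [Algebra ℂ A]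
    (I : LieIdeal ℂ (A ⊗[ℂ] g)) :
    ∃ S : Ideal A,
      (I : Submodule ℂ (A ⊗[ℂ] g)) =
        Submodule.span ℂ {z : A ⊗[ℂ] g | ∃ a ∈ S, ∃ y : g, z = a ⊗ₜ[ℂ] y} := by
  classical
  -- bracketing with `1 ⊗ x` is `lTensor` of `ad x`
  have hbracket : ∀ (x : g) (z : A ⊗[ℂ] g),
      LinearMap.lTensor A ((LieAlgebra.ad ℂ g) x) z = ⁅(1:A) ⊗ₜ[ℂ] x, z⁆ := by
    intro x z
    induction z using TensorProduct.induction_on with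
    | zero => simp
    | tmul a y =>
        rw [LieAlgebra.ExtendScalars.bracket_tmul, one_mul]
        simp [LieAlgebra.ad_apply]
    | add u w hu hw => rw [map_add, lie_add, hu, hw]
  -- `I` is stable under `lTensor A f` for every endomorphism `f`
  have stable' : ∀ f ∈ Algebra.adjoin ℂ (Set.range (LieAlgebra.ad ℂ g)),
      ∀ z ∈ I, LinearMap.lTensor A f z ∈ I := by
    intro f hf
    induction hf using Algebra.adjoin_induction with
    | mem x hx =>
        obtain ⟨x', rfl⟩ := hx
        intro z hz
        rw [hbracket]
        exact I.lie_mem hz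
    | algebraMap r =>
        intro z hz
        have h1 : (algebraMap ℂ (Module.End ℂ g) r) = r • (LinearMap.id : g →ₗ[ℂ] g) := rfl
        rw [h1, LinearMap.lTensor_smul, LinearMap.lTensor_id]
        exact I.smul_mem r hz
    | add p q hp' hq' hp hq =>
        intro z hz
        rw [LinearMap.lTensor_add, LinearMap.add_apply]
        exact I.add_mem (hp z hz) (hq z hz)
    | mul p q hp' hq' hp hq =>
        intro z hz
        have h1 : (p * q : Module.End ℂ g) = p ∘ₗ q := rfl
        rw [h1, LinearMap.lTensor_comp, LinearMap.coe_comp, Function.comp_apply]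
        exact hp _ (hq z hz)
  have stable : ∀ f : Module.End ℂ g, ∀ z ∈ I, LinearMap.lTensor A f z ∈ I :=
    fun f => stable' f (burnside g f)
  -- derived subalgebra is everything
  have htop : (⁅(⊤ : LieIdeal ℂ g), (⊤ : LieIdeal ℂ g)⁆ : LieIdeal ℂ g) = ⊤ := by
    rcases (inferInstance : IsSimpleOrder (LieIdeal ℂ g)).eq_bot_or_eq_top
      (⁅(⊤ : LieIdeal ℂ g), (⊤ : LieIdeal ℂ g)⁆ : LieIdeal ℂ g) with h | h
    · exfalso
      apply LieAlgebra.IsSimple.non_abelian (R := ℂ) (L := g)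
      constructor
      intro x y
      have hmem : (⁅x, y⁆ : g) ∈ (⁅(⊤ : LieIdeal ℂ g), (⊤ : LieIdeal ℂ g)⁆ : LieIdeal ℂ g) :=
        LieSubmodule.lie_mem_lie (LieSubmodule.mem_top x) (LieSubmodule.mem_top y)
      rw [h] at hmem
      simpa using hmem
    · exact h
  -- the ideal S
  let S : Ideal A :=
    { carrier := {a : A | ∀ y : g, a ⊗ₜ[ℂ] y ∈ I}
      add_mem' := fun {a b} ha hb y => by
        rw [add_tmul]; exact I.add_mem (ha y) (hb y)
      zero_mem' := fun y => by rw [zero_tmul]; exact I.zero_mem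
      smul_mem' := fun b a ha => by
        intro y
        have hy : y ∈ (⁅(⊤ : LieIdeal ℂ g), (⊤ : LieIdeal ℂ g)⁆ : LieIdeal ℂ g) := by
          rw [htop]; exact LieSubmodule.mem_top y
        rw [← LieSubmodule.mem_toSubmodule, LieSubmodule.lieIdeal_oper_eq_linear_span] at hy
        have key : ∀ m ∈ Submodule.span ℂ
            {m : g | ∃ (x : (⊤ : LieIdeal ℂ g)) (n : (⊤ : LieIdeal ℂ g)), ⁅(x : g), (n : g)⁆ = m},
            (b * a) ⊗ₜ[ℂ] m ∈ I := by
          intro m hm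
          induction hm using Submodule.span_induction with
          | mem m hm =>
              obtain ⟨x, n, rfl⟩ := hm
              have : (b * a) ⊗ₜ[ℂ] (⁅(x : g), (n : g)⁆ : g) = ⁅b ⊗ₜ[ℂ] (x : g), a ⊗ₜ[ℂ] (n : g)⁆ := by
                rw [LieAlgebra.ExtendScalars.bracket_tmul]
              rw [this]
              exact I.lie_mem (ha n)
          | zero => rw [tmul_zero]; exact I.zero_mem
          | add u w _ _ hu hw => rw [tmul_add]; exact I.add_mem hu hw
          | smul c m _ hm => rw [tmul_smul]; exact I.smul_mem c hm
        exact key y hy }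
  refine ⟨S, ?_⟩
  set n := Module.finrank ℂ g with hn
  let bC : Module.Basis (Fin n) ℂ g := Module.finBasis ℂ g
  let ρ : Fin n → (A ⊗[ℂ] g →ₗ[ℂ] A) := fun i =>
    (TensorProduct.rid ℂ A).toLinearMap ∘ₗ LinearMap.lTensor A (bC.coord i)
  apply le_antisymm
  · intro z hz
    have hz' : z ∈ I := hz
    -- each coefficient belongs to S
    have hcoef : ∀ i : Fin n, (ρ i z) ∈ S := by
      intro i x
      let f : Module.End ℂ g := (LinearMap.toSpanSingleton ℂ g x) ∘ₗ (bC.coord i)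
      have h1 : LinearMap.lTensor A f = ((TensorProduct.mk ℂ A g).flip x) ∘ₗ ρ i := by
        apply TensorProduct.ext'
        intro a y
        simp only [LinearMap.lTensor_tmul, LinearMap.coe_comp, Function.comp_apply,
          TensorProduct.mk_apply, LinearMap.flip_apply, LinearEquiv.coe_coe,
          TensorProduct.rid_tmul, LinearMap.toSpanSingleton_apply, f, ρ]
        rw [TensorProduct.tmul_smul, TensorProduct.smul_tmul']
      have h2 := stable f z hz'
      rw [h1] at h2
      exact h2
    -- decomposition of z
    have hdecomp : z = ∑ i, (ρ i z) ⊗ₜ[ℂ] bC i := by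
      have hid : (LinearMap.id : A ⊗[ℂ] g →ₗ[ℂ] A ⊗[ℂ] g)
          = ∑ i, ((TensorProduct.mk ℂ A g).flip (bC i)) ∘ₗ ρ i := by
        apply TensorProduct.ext'
        intro a y
        simp only [LinearMap.id_apply, LinearMap.sum_apply, LinearMap.coe_comp,
          Function.comp_apply, TensorProduct.mk_apply, LinearMap.flip_apply,
          LinearMap.lTensor_tmul, LinearEquiv.coe_coe, TensorProduct.rid_tmul, ρ]
        have : ∀ i : Fin n, (bC.coord i y • a) ⊗ₜ[ℂ] bC i = a ⊗ₜ[ℂ] (bC.coord i y • bC i) := by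
          intro i
          rw [TensorProduct.tmul_smul, TensorProduct.smul_tmul']
        rw [Finset.sum_congr rfl (fun i _ => this i), ← TensorProduct.tmul_sum]
        congr 1
        simp only [Module.Basis.coord_apply]
        exact (bC.sum_repr y).symm
      have := LinearMap.congr_fun hid z
      simpa using this
    rw [hdecomp]
    apply Submodule.sum_mem
    intro i _
    exact Submodule.subset_span ⟨ρ i z, hcoef i, bC i, rfl⟩
  · rw [Submodule.span_le]
    rintro _ ⟨a, haS, y, rfl⟩
    exact haS y
end

section
/- Let A be a commutative ℂ-algebra with a countable linearly independent family (a_r)_{r ≥ 1} in A, and fix N ∈ ℕ. For b ∈ A let sym_N(b) = Σ_{k=0}^{N-1} 1^{⊗k} ⊗ b ⊗ 1^{⊗(N-k-1)} ∈ A^{⊗N}. Then the products sym_N(a_{r₁})·sym_N(a_{r₂})⋯sym_N(a_{r_m}) over all weakly increasing tuples 1 ≤ r₁ ≤ ⋯ ≤ r_m with m ≤ N are linearly independent in A^{⊗N}. -/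
open scoped TensorProduct PiTensorProduct

/-- `sym_N(b) = Σ_{k=0}^{N-1} 1^{⊗k} ⊗ b ⊗ 1^{⊗(N-k-1)}` in the `N`-th tensor power of `A`. -/
noncomputable def symTensor {A : Type*} [CommRing A] [Algebra ℂ A] (N : ℕ) (b : A) :
    ⨂[ℂ] _ : Fin N, A :=
  ∑ k : Fin N, PiTensorProduct.tprod ℂ (Function.update (fun _ : Fin N => (1 : A)) k b)

section Aux
variable {A : Type*} [CommRing A] [Algebra ℂ A] {N : ℕ}

lemma prod_tprod {m : ℕ} (t : Finset (Fin m)) (u : Fin m → (Fin N → A)) :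
    ∏ s ∈ t, PiTensorProduct.tprod ℂ (u s) =
      PiTensorProduct.tprod ℂ (fun k => ∏ s ∈ t, u s k) := by
  classical
  induction t using Finset.induction with
  | empty => simp [PiTensorProduct.one_def]; rfl
  | insert _ _ h ih =>
      rw [Finset.prod_insert h, ih, PiTensorProduct.tprod_mul_tprod]
      congr 1
      funext k
      rw [Finset.prod_insert h]
      rfl

lemma symTensor_prod_expand (a : ℕ → A) {m : ℕ} (r : Fin m → ℕ) :
    ∏ s : Fin m, symTensor N (a (r s)) =
      ∑ f ∈ Fintype.piFinset (fun _ : Fin m => (Finset.univ : Finset (Fin N))),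
        PiTensorProduct.tprod ℂ
          (fun k => ∏ s : Fin m, if f s = k then a (r s) else 1) := by
  classical
  unfold symTensor
  rw [Finset.prod_univ_sum]
  refine Finset.sum_congr rfl fun f _ => ?_
  rw [prod_tprod]
  congr 1
  funext k
  refine Finset.prod_congr rfl fun s _ => ?_
  rw [Function.update_apply]
  by_cases h : f s = k
  · simp [h]
  · simp [h, Ne.symm h]

noncomputable def phiAux {ι : Type*} (B : Module.Basis ι ℂ A) (g : Fin N → ι) :
    (⨂[ℂ] _ : Fin N, A) →ₗ[ℂ] ℂ :=
  PiTensorProduct.lift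
    ((MultilinearMap.mkPiAlgebra ℂ (Fin N) ℂ).compLinearMap (fun k => B.coord (g k)))

lemma phiAux_tprod {ι : Type*} (B : Module.Basis ι ℂ A) (g : Fin N → ι) (v : Fin N → A) :
    phiAux B g (PiTensorProduct.tprod ℂ v) = ∏ k, B.repr (v k) (g k) := by
  simp [phiAux, Module.Basis.coord_apply]

lemma sigma_eq {N : ℕ}
    (p q : Σ m : Fin (N + 1), {r : Fin (m : ℕ) → ℕ // Monotone r ∧ ∀ s, 1 ≤ r s})
    (h1 : (p.1 : ℕ) = (q.1 : ℕ))
    (h2 : ∀ s : Fin (p.1 : ℕ), p.2.1 s = q.2.1 (Fin.cast h1 s)) : p = q := by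
  obtain ⟨m1, r1, hr1⟩ := p
  obtain ⟨m2, r2, hr2⟩ := q
  simp only at h1 h2
  have hm : m1 = m2 := Fin.ext h1
  subst hm
  simp only [Sigma.mk.inj_iff, heq_eq_eq, Subtype.mk.injEq]
  refine ⟨trivial, ?_⟩
  funext s
  have := h2 s
  simpa using this

end Aux

/-- Let `A` be a commutative `ℂ`-algebra and `(a_r)_{r ≥ 1}` a family in `A` such that
`{1} ∪ {a_r : r ≥ 1}` is linearly independent (encoded by `a 0 = 1` and linear independence
of the whole family `a`).  Then the products
`sym_N(a_{r₁}) ⋯ sym_N(a_{r_m})` over all weakly increasing tuples `1 ≤ r₁ ≤ ⋯ ≤ r_m`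
with `m ≤ N` are linearly independent in `A^{⊗N}`. -/
theorem stmt5 (A : Type*) [CommRing A] [Algebra ℂ A] (N : ℕ)
    (a : ℕ → A) (ha0 : a 0 = 1) (hindep : LinearIndependent ℂ a) :
    LinearIndependent ℂ
      (fun p : Σ m : Fin (N + 1), {r : Fin (m : ℕ) → ℕ // Monotone r ∧ ∀ s, 1 ≤ r s} =>
        ∏ s : Fin (p.1 : ℕ), symTensor N (a (p.2.1 s))) := by
  classical
  have ha_inj : Function.Injective a := hindep.injective
  have hs : LinearIndepOn ℂ id (Set.range a) := (linearIndepOn_id_range_iff ha_inj).mpr hindep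
  set ι := hs.extend (Set.subset_univ (Set.range a)) with hι
  set B : Module.Basis ι ℂ A := Module.Basis.extend hs with hBdef
  have hmem : ∀ n : ℕ, a n ∈ hs.extend (Set.subset_univ (Set.range a)) :=
    fun n => hs.subset_extend _ ⟨n, rfl⟩
  set idx : ℕ → ι := fun n => ⟨a n, hmem n⟩ with hidx
  have hB : ∀ n, B (idx n) = a n := fun n => Module.Basis.extend_apply_self hs _
  have hrepr : ∀ n n' : ℕ, B.repr (a n') (idx n) = if n' = n then 1 else 0 := by
    intro n n'
    rw [← hB n', B.repr_self, Finsupp.single_apply]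
    by_cases h : n' = n
    · subst h; simp
    · rw [if_neg, if_neg h]
      intro hc
      exact h (ha_inj (Subtype.ext_iff.mp hc))
  rw [linearIndependent_iff']
  intro t c hsum
  have key : ∀ p0 ∈ t, (∀ q ∈ t, ((p0.1 : ℕ) < (q.1 : ℕ)) → c q = 0) → c p0 = 0 := by
    intro p0 hp0 htop
    have hm0N : (p0.1 : ℕ) ≤ N := Nat.lt_succ_iff.mp p0.1.isLt
    set m0 : ℕ := (p0.1 : ℕ) with hm0def
    set r0 : Fin m0 → ℕ := p0.2.1 with hr0def
    have hpos0 : ∀ jj : Fin m0, 1 ≤ r0 jj := p0.2.2.2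
    have hmono00 : Monotone r0 := p0.2.2.1
    set g : Fin N → ι := fun k =>
      if h : (k : ℕ) < m0 then idx (r0 ⟨(k : ℕ), h⟩) else idx 0 with hgdef
    have hg_repr : ∀ (k : Fin N) (n : ℕ),
        B.repr (a n) (g k) =
          if h : (k : ℕ) < m0 then (if n = r0 ⟨(k : ℕ), h⟩ then 1 else 0)
          else (if n = 0 then 1 else 0) := by
      intro k n
      by_cases h : (k : ℕ) < m0
      · rw [dif_pos h]
        have : g k = idx (r0 ⟨(k : ℕ), h⟩) := by rw [hgdef]; exact dif_pos h
        rw [this]; exact hrepr _ n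
      · rw [dif_neg h]
        have : g k = idx 0 := by rw [hgdef]; exact dif_neg h
        rw [this]; exact hrepr _ n
    -- the heart: analysis of a single term
    have hterm : ∀ (mp : Fin (N + 1)) (rp : Fin (mp : ℕ) → ℕ)
        (hmono : Monotone rp) (hpos : ∀ s, 1 ≤ rp s), (mp : ℕ) ≤ m0 →
        ∀ f : Fin (mp : ℕ) → Fin N,
        (∏ k : Fin N, B.repr (∏ s : Fin (mp : ℕ), if f s = k then a (rp s) else 1) (g k)) ≠ 0 →
        ((⟨mp, rp, hmono, hpos⟩ : Σ m : Fin (N + 1),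
            {r : Fin (m : ℕ) → ℕ // Monotone r ∧ ∀ s, 1 ≤ r s}) = p0 ∧
          (∏ k : Fin N,
            B.repr (∏ s : Fin (mp : ℕ), if f s = k then a (rp s) else 1) (g k)) = 1) := by
      intro mp rp hmono hpos hple f hne
      set fib : Fin N → Finset (Fin (mp : ℕ)) :=
        fun k => Finset.univ.filter (fun s => f s = k) with hfibdef
      have hfactor_ne : ∀ k : Fin N,
          B.repr (∏ s : Fin (mp : ℕ), if f s = k then a (rp s) else 1) (g k) ≠ 0 := by
        intro k hk
        exact hne (Finset.prod_eq_zero (Finset.mem_univ k) hk)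
      have hprod_fib : ∀ k : Fin N,
          (∏ s : Fin (mp : ℕ), if f s = k then a (rp s) else 1) = ∏ s ∈ fib k, a (rp s) :=
        fun k => (Finset.prod_filter _ _).symm
      have hempty : ∀ k : Fin N, fib k = ∅ →
          (∏ s : Fin (mp : ℕ), if f s = k then a (rp s) else 1) = a 0 := by
        intro k hk
        rw [hprod_fib k, hk, Finset.prod_empty, ha0]
      -- step 1: fibers over k < m0 are nonempty
      have hne_fib : ∀ k : Fin N, (k : ℕ) < m0 → fib k ≠ ∅ := by
        intro k hk hcon
        refine hfactor_ne k ?_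
        rw [hempty k hcon, hg_repr, dif_pos hk,
          if_neg (by have := hpos0 ⟨(k : ℕ), hk⟩; omega)]
      -- counting
      have hcard : ∑ k : Fin N, (fib k).card = (mp : ℕ) := by
        have := Finset.card_eq_sum_card_fiberwise
          (f := f) (s := Finset.univ) (t := (Finset.univ : Finset (Fin N)))
          (fun s _ => Finset.mem_univ (f s))
        simpa [hfibdef] using this.symm
      set S : Finset (Fin N) := Finset.univ.filter (fun k => (k : ℕ) < m0) with hSdef
      have hScard : S.card = m0 := by
        have hmap : S = Finset.map (Fin.castLEEmb hm0N) Finset.univ := by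
          ext k
          simp only [hSdef, Finset.mem_filter, Finset.mem_univ, true_and, Finset.mem_map,
            Fin.castLEEmb_apply]
          constructor
          · intro hk; exact ⟨⟨(k : ℕ), hk⟩, Fin.ext rfl⟩
          · rintro ⟨j, rfl⟩; exact j.isLt
        rw [hmap, Finset.card_map, Finset.card_univ, Fintype.card_fin]
      have h1le : ∀ k ∈ S, 1 ≤ (fib k).card := by
        intro k hk
        rw [hSdef, Finset.mem_filter] at hk
        exact Finset.card_pos.mpr
          (Finset.nonempty_iff_ne_empty.mpr (hne_fib k hk.2))
      have hsplit : (∑ k ∈ S, (fib k).card) +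
          (∑ k ∈ Finset.univ.filter (fun k : Fin N => ¬ (k : ℕ) < m0), (fib k).card)
            = (mp : ℕ) := by
        rw [hSdef, Finset.sum_filter_add_sum_filter_not, hcard]
      have hge : m0 ≤ ∑ k ∈ S, (fib k).card := by
        calc m0 = S.card * 1 := by rw [hScard, mul_one]
        _ = S.card • 1 := by rw [smul_eq_mul]
        _ ≤ ∑ k ∈ S, (fib k).card := Finset.card_nsmul_le_sum S _ 1 h1le
      have hSsum : ∑ k ∈ S, (fib k).card = m0 := by omega
      have hCsum : ∑ k ∈ Finset.univ.filter (fun k : Fin N => ¬ (k : ℕ) < m0),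
          (fib k).card = 0 := by omega
      have hm_eq : (mp : ℕ) = m0 := by omega
      have hfib_empty : ∀ k : Fin N, ¬ ((k : ℕ) < m0) → fib k = ∅ := by
        intro k hk
        apply Finset.card_eq_zero.mp
        exact (Finset.sum_eq_zero_iff.mp hCsum) k
          (Finset.mem_filter.mpr ⟨Finset.mem_univ _, hk⟩)
      have hfib_card : ∀ k : Fin N, (k : ℕ) < m0 → (fib k).card = 1 := by
        have h2 : ∑ _k ∈ S, (1 : ℕ) = ∑ k ∈ S, (fib k).card := by
          rw [Finset.sum_const, smul_eq_mul, mul_one, hScard, hSsum]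
        have h3 := (Finset.sum_eq_sum_iff_of_le h1le).mp h2
        intro k hk
        exact (h3 k (Finset.mem_filter.mpr ⟨Finset.mem_univ _, hk⟩)).symm
      have hflt : ∀ s : Fin (mp : ℕ), (f s : ℕ) < m0 := by
        intro s
        by_contra hc
        have h1 : s ∈ fib (f s) := by
          rw [hfibdef]; exact Finset.mem_filter.mpr ⟨Finset.mem_univ _, rfl⟩
        rw [hfib_empty (f s) hc] at h1
        exact absurd h1 (Finset.notMem_empty s)
      have hsingle : ∀ (k : Fin N), (k : ℕ) < m0 → ∃ s0, fib k = {s0} :=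
        fun k hk => Finset.card_eq_one.mp (hfib_card k hk)
      have hfac : ∀ (k : Fin N) (s0 : Fin (mp : ℕ)), fib k = {s0} →
          (∏ s : Fin (mp : ℕ), if f s = k then a (rp s) else 1) = a (rp s0) := by
        intro k s0 hs0
        rw [hprod_fib k, hs0, Finset.prod_singleton]
      have hmemfib : ∀ s : Fin (mp : ℕ), s ∈ fib (f s) := by
        intro s; rw [hfibdef]; exact Finset.mem_filter.mpr ⟨Finset.mem_univ _, rfl⟩
      have hrel : ∀ s : Fin (mp : ℕ), rp s = r0 ⟨(f s : ℕ), hflt s⟩ := by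
        intro s
        obtain ⟨s0, hs0⟩ := hsingle (f s) (hflt s)
        have hss0 : s = s0 := by
          have := hmemfib s
          rw [hs0, Finset.mem_singleton] at this
          exact this
        subst hss0
        have hnz := hfactor_ne (f s)
        rw [hfac (f s) s hs0, hg_repr, dif_pos (hflt s)] at hnz
        by_contra hc
        rw [if_neg hc] at hnz
        exact hnz rfl
      have hfinj : Function.Injective f := by
        intro s1 s2 hf
        obtain ⟨s0, hs0⟩ := hsingle (f s1) (hflt s1)
        have h1 := hmemfib s1
        have h2 := hmemfib s2
        rw [← hf] at h2
        rw [hs0, Finset.mem_singleton] at h1 h2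
        rw [h1, h2]
      -- term value is 1
      have hval : (∏ k : Fin N,
          B.repr (∏ s : Fin (mp : ℕ), if f s = k then a (rp s) else 1) (g k)) = 1 := by
        apply Finset.prod_eq_one
        intro k _
        by_cases hk : (k : ℕ) < m0
        · obtain ⟨s0, hs0⟩ := hsingle k hk
          have hfs0 : f s0 = k := by
            have : s0 ∈ fib k := by rw [hs0]; exact Finset.mem_singleton_self s0
            rw [hfibdef] at this
            exact (Finset.mem_filter.mp this).2
          rw [hfac k s0 hs0, hg_repr, dif_pos hk, if_pos]
          rw [hrel s0]
          have hvv : (f s0 : Fin N).val = k.val := congrArg Fin.val hfs0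
          exact congrArg r0 (Fin.ext hvv)
        · rw [hempty k (hfib_empty k hk), hg_repr, dif_neg hk, if_pos rfl]
      refine ⟨?_, hval⟩
      -- p = p0 via monotone uniqueness
      refine sigma_eq _ _ hm_eq ?_
      intro s
      set e : Fin m0 → Fin m0 :=
        fun j => ⟨(f (Fin.cast hm_eq.symm j) : ℕ), hflt _⟩ with hedef
      have heinj : Function.Injective e := by
        intro j1 j2 hj
        have hv' : (e j1).val = (e j2).val := congrArg Fin.val hj
        have hv : (f (Fin.cast hm_eq.symm j1)).val = (f (Fin.cast hm_eq.symm j2)).val := hv'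
        have hff : f (Fin.cast hm_eq.symm j1) = f (Fin.cast hm_eq.symm j2) := Fin.ext hv
        have hcc := hfinj hff
        have hv2 : (Fin.cast hm_eq.symm j1).val = (Fin.cast hm_eq.symm j2).val :=
          congrArg Fin.val hcc
        exact Fin.ext hv2
      have hbij : Function.Bijective e := Finite.injective_iff_bijective.mp heinj
      set σ : Equiv.Perm (Fin m0) := Equiv.ofBijective e hbij with hσdef
      have hcomp : ∀ j : Fin m0, (r0 ∘ σ) j = rp (Fin.cast hm_eq.symm j) := by
        intro j
        have hσe : σ j = e j := rfl
        rw [Function.comp_apply, hσe, hedef]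
        exact (hrel (Fin.cast hm_eq.symm j)).symm
      have hcastmono : Monotone (Fin.cast hm_eq.symm : Fin m0 → Fin (mp : ℕ)) :=
        fun _ _ hxy => hxy
      have hmono1 : Monotone (r0 ∘ σ) := by
        have hfe : (r0 ∘ σ) = fun j => rp (Fin.cast hm_eq.symm j) := funext hcomp
        rw [hfe]
        exact hmono.comp hcastmono
      have hmono0 : Monotone (r0 ∘ (Equiv.refl (Fin m0))) := hmono00
      have huniq : r0 ∘ σ = r0 ∘ (Equiv.refl (Fin m0)) :=
        Tuple.unique_monotone hmono1 hmono0
      have hres := congrFun huniq (Fin.cast hm_eq s)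
      rw [hcomp] at hres
      simp only [Function.comp_apply, Equiv.refl_apply] at hres
      have hcc : Fin.cast hm_eq.symm (Fin.cast hm_eq s) = s := rfl
      rw [hcc] at hres
      exact hres
    -- assemble: apply the functional to the vanishing sum
    have h0 : ∑ p ∈ t, c p * phiAux B g
        (∏ s : Fin (p.1 : ℕ), symTensor N (a (p.2.1 s))) = 0 := by
      have hc0 := congrArg (phiAux B g) hsum
      rw [map_sum, map_zero] at hc0
      simpa only [map_smul, smul_eq_mul] using hc0
    have hphi : ∀ (p : Σ m : Fin (N + 1), {r : Fin (m : ℕ) → ℕ // Monotone r ∧ ∀ s, 1 ≤ r s}),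
        phiAux B g (∏ s : Fin (p.1 : ℕ), symTensor N (a (p.2.1 s))) =
        ∑ f ∈ Fintype.piFinset (fun _ : Fin (p.1 : ℕ) => (Finset.univ : Finset (Fin N))),
          ∏ k : Fin N,
            B.repr (∏ s : Fin (p.1 : ℕ), if f s = k then a (p.2.1 s) else 1) (g k) := by
      intro p
      rw [symTensor_prod_expand a p.2.1, map_sum]
      refine Finset.sum_congr rfl fun f _ => ?_
      rw [phiAux_tprod]
    have hzero : ∀ p ∈ t, p ≠ p0 →
        c p * phiAux B g (∏ s : Fin (p.1 : ℕ), symTensor N (a (p.2.1 s))) = 0 := by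
      intro p hp hnep
      rcases le_or_gt (p.1 : ℕ) m0 with hle | hlt
      · have hz : phiAux B g (∏ s : Fin (p.1 : ℕ), symTensor N (a (p.2.1 s))) = 0 := by
          rw [hphi p]
          refine Finset.sum_eq_zero fun f _ => ?_
          by_contra hns
          exact hnep (hterm p.1 p.2.1 p.2.2.1 p.2.2.2 hle f hns).1
        rw [hz, mul_zero]
      · rw [htop p hp hlt, zero_mul]
    have hsingle0 : c p0 * phiAux B g
        (∏ s : Fin (p0.1 : ℕ), symTensor N (a (p0.2.1 s))) = 0 :=
      (Finset.sum_eq_single_of_mem p0 hp0 hzero).symm.trans h0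
    -- the coefficient of p0 is a positive integer
    set f0 : Fin (p0.1 : ℕ) → Fin N :=
      fun s => ⟨(s : ℕ), lt_of_lt_of_le s.isLt hm0N⟩ with hf0def
    have hf0term : (∏ k : Fin N,
        B.repr (∏ s : Fin (p0.1 : ℕ), if f0 s = k then a (p0.2.1 s) else 1) (g k)) = 1 := by
      apply Finset.prod_eq_one
      intro k _
      by_cases hk : (k : ℕ) < m0
      · have hinner : (∏ s : Fin (p0.1 : ℕ), if f0 s = k then a (p0.2.1 s) else 1)
            = a (r0 ⟨(k : ℕ), hk⟩) := by
          rw [Finset.prod_eq_single (⟨(k : ℕ), hk⟩ : Fin m0)]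
          · rw [if_pos (Fin.ext rfl)]
          · intro b _ hb
            refine if_neg fun hcon => hb ?_
            have hv : (f0 b).val = k.val := congrArg Fin.val hcon
            exact Fin.ext hv
          · intro hmem; exact absurd (Finset.mem_univ _) hmem
        rw [hinner, hg_repr, dif_pos hk, if_pos rfl]
      · have hinner : (∏ s : Fin (p0.1 : ℕ), if f0 s = k then a (p0.2.1 s) else 1) = 1 := by
          refine Finset.prod_eq_one fun ss _ => if_neg fun hcon => ?_
          have hv : (f0 ss).val = k.val := congrArg Fin.val hcon
          have hv2 : (ss : ℕ) = (k : ℕ) := hv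
          exact hk (hv2 ▸ ss.isLt)
        rw [hinner, ← ha0, hg_repr, dif_neg hk, if_pos rfl]
    have hphi0 : phiAux B g (∏ s : Fin (p0.1 : ℕ), symTensor N (a (p0.2.1 s))) =
        (((Fintype.piFinset (fun _ : Fin (p0.1 : ℕ) => (Finset.univ : Finset (Fin N)))).filter
          (fun f => (∏ k : Fin N,
            B.repr (∏ s : Fin (p0.1 : ℕ), if f s = k then a (p0.2.1 s) else 1) (g k)) ≠ 0)).card
          : ℂ) := by
      rw [hphi p0, ← Finset.sum_filter_ne_zero]
      rw [Finset.sum_congr rfl (fun f hf =>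
        (hterm p0.1 p0.2.1 p0.2.2.1 p0.2.2.2 hm0def.ge f (Finset.mem_filter.mp hf).2).2)]
      rw [Finset.sum_const, nsmul_eq_mul, mul_one]
    have hcard_ne : (((Fintype.piFinset
        (fun _ : Fin (p0.1 : ℕ) => (Finset.univ : Finset (Fin N)))).filter
          (fun f => (∏ k : Fin N,
            B.repr (∏ s : Fin (p0.1 : ℕ), if f s = k then a (p0.2.1 s) else 1) (g k)) ≠ 0)).card
          : ℂ) ≠ 0 := by
      rw [Nat.cast_ne_zero]
      refine Finset.card_ne_zero_of_mem (a := f0) (Finset.mem_filter.mpr ⟨?_, ?_⟩)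
      · simp [Fintype.mem_piFinset]
      · rw [hf0term]; exact one_ne_zero
    rw [hphi0] at hsingle0
    exact (mul_eq_zero.mp hsingle0).resolve_right hcard_ne
  have main : ∀ (j : ℕ), ∀ p ∈ t, N ≤ (p.1 : ℕ) + j → c p = 0 := by
    intro j
    induction j with
    | zero =>
        intro p hp hpN
        refine key p hp fun q hq hlt => absurd hlt ?_
        have := q.1.isLt
        omega
    | succ j ih =>
        intro p hp hpN
        exact key p hp fun q hq hlt => ih q hq (by omega)
  intro p hp
  exact main N p hp (by omega)
end

section
/- Let V be a finite-dimensional irreducible module (in the category of locally finite g-modules) for g⊗A, where g is a finite-dimensional complex simple Lie algebra and A a commutative unital ℂ-algebra. Then there exists a weight λ of V with dim V_λ = 1 and wt(V) ⊆ λ − Q⁺. -/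
open TensorProduct

/-- The `χ`-weight space of a `g`-module `V` with respect to a Cartan subalgebra `H`
(used below with `V = g`, the adjoint module, to describe root spaces). -/
def wtSpace {g : Type*} [LieRing g] [LieAlgebra ℂ g] (H : LieSubalgebra ℂ g)
    (V : Type*) [AddCommGroup V] [Module ℂ V] [LieRingModule g V] [LieModule ℂ g V]
    (χ : Module.Dual ℂ H) : Submodule ℂ V where
  carrier := {v | ∀ h : H, ⁅(h : g), v⁆ = χ h • v}
  add_mem' := by
    intro x y hx hy h
    rw [lie_add, hx h, hy h, smul_add]
  zero_mem' := by intro h; simp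
  smul_mem' := by
    intro c x hx h
    rw [lie_smul, hx h, smul_comm]

/-- The `χ`-weight space of a `g⊗A`-module `V`, with `h ∈ H ⊆ g` acting through `1 ⊗ h`. -/
def cwtSpace {g : Type*} [LieRing g] [LieAlgebra ℂ g] (A : Type*) [CommRing A] [Algebra ℂ A]
    (H : LieSubalgebra ℂ g) (V : Type*) [AddCommGroup V] [Module ℂ V]
    [LieRingModule (A ⊗[ℂ] g) V] [LieModule ℂ (A ⊗[ℂ] g) V]
    (χ : Module.Dual ℂ H) : Submodule ℂ V where
  carrier := {v | ∀ h : H, ⁅((1 : A) ⊗ₜ[ℂ] (h : g) : A ⊗[ℂ] g), v⁆ = χ h • v}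
  add_mem' := by
    intro x y hx hy h
    rw [lie_add, hx h, hy h, smul_add]
  zero_mem' := by intro h; simp
  smul_mem' := by
    intro c x hx h
    rw [lie_smul, hx h, smul_comm]


section Aux

variable {g : Type*} [LieRing g] [LieAlgebra ℂ g]
variable {H : LieSubalgebra ℂ g}
variable {A : Type*} [CommRing A] [Algebra ℂ A]
variable {V : Type*} [AddCommGroup V] [Module ℂ V]
  [LieRingModule (A ⊗[ℂ] g) V] [LieModule ℂ (A ⊗[ℂ] g) V]

lemma mem_cwt {χ : Module.Dual ℂ H} {v : V} :
    v ∈ cwtSpace A H V χ ↔ ∀ h : H, ⁅((1 : A) ⊗ₜ[ℂ] (h : g) : A ⊗[ℂ] g), v⁆ = χ h • v :=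
  Iff.rfl

lemma cwt_shift {β χ : Module.Dual ℂ H} {x : g} (hx : x ∈ wtSpace H g β) (a : A) {v : V}
    (hv : v ∈ cwtSpace A H V χ) :
    ⁅(a ⊗ₜ[ℂ] x : A ⊗[ℂ] g), v⁆ ∈ cwtSpace A H V (χ + β) := by
  intro h
  have h1 : ⁅((1 : A) ⊗ₜ[ℂ] (h : g) : A ⊗[ℂ] g), (a ⊗ₜ[ℂ] x : A ⊗[ℂ] g)⁆
      = β h • (a ⊗ₜ[ℂ] x : A ⊗[ℂ] g) := by
    rw [LieAlgebra.ExtendScalars.bracket_tmul, one_mul, hx h, tmul_smul]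
  rw [leibniz_lie, h1, smul_lie, hv h, lie_smul, LinearMap.add_apply, add_smul]
  abel

/-- The map `y ↦ ⁅a ⊗ y, v⁆` as a linear map in `y`. -/
noncomputable def lieTmulLeft (a : A) (v : V) : g →ₗ[ℂ] V where
  toFun y := ⁅(a ⊗ₜ[ℂ] y : A ⊗[ℂ] g), v⁆
  map_add' y z := by
    show ⁅(a ⊗ₜ[ℂ] (y + z) : A ⊗[ℂ] g), v⁆ = _
    rw [tmul_add, add_lie]
  map_smul' c y := by
    show ⁅(a ⊗ₜ[ℂ] (c • y) : A ⊗[ℂ] g), v⁆ = c • ⁅(a ⊗ₜ[ℂ] y : A ⊗[ℂ] g), v⁆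
    rw [tmul_smul, smul_lie]

@[simp] lemma lieTmulLeft_apply (a : A) (v : V) (y : g) :
    lieTmulLeft a v y = ⁅(a ⊗ₜ[ℂ] y : A ⊗[ℂ] g), v⁆ := rfl


lemma cwt_disjoint_finset (T : Finset (Module.Dual ℂ H)) {χ : Module.Dual ℂ H} (hχ : χ ∉ T)
    {v : V} (hv : v ∈ cwtSpace A H V χ) (hv' : v ∈ ⨆ μ ∈ T, cwtSpace A H V μ) : v = 0 := by
  classical
  induction T using Finset.induction generalizing v with
  | empty => simpa using hv'
  | @insert μ₀ T hμ₀T ih =>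
    have hχT : χ ∉ T := fun h => hχ (Finset.mem_insert_of_mem h)
    have hχμ₀ : χ ≠ μ₀ := fun h => hχ (h ▸ Finset.mem_insert_self _ _)
    obtain ⟨h₀, hh₀⟩ : ∃ h₀ : H, χ h₀ ≠ μ₀ h₀ := by
      by_contra hcon
      push_neg at hcon
      exact hχμ₀ (LinearMap.ext hcon)
    rw [Finset.iSup_insert] at hv'
    obtain ⟨w, hw, u, hu, hwu⟩ := Submodule.mem_sup.mp hv'
    set L : V →ₗ[ℂ] V :=
      (LieModule.toEnd ℂ (A ⊗[ℂ] g) V (((1:A) ⊗ₜ[ℂ] (h₀:g)) : A ⊗[ℂ] g) : V →ₗ[ℂ] V)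
        - μ₀ h₀ • LinearMap.id with hL
    have hLapp : ∀ (μ : Module.Dual ℂ H) (z : V), z ∈ cwtSpace A H V μ →
        L z = (μ h₀ - μ₀ h₀) • z := by
      intro μ z hz
      rw [hL, LinearMap.sub_apply, LinearMap.smul_apply, LinearMap.id_apply,
        LieModule.toEnd_apply_apply, hz h₀, sub_smul]
    have e2 : L v ∈ ⨆ μ ∈ T, cwtSpace A H V μ := by
      have hLw : L w = 0 := by
        rw [hLapp μ₀ w hw, sub_self, zero_smul]
      have hLu : L u ∈ ⨆ μ ∈ T, cwtSpace A H V μ := by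
        have hsub : (⨆ μ ∈ T, cwtSpace A H V μ) ≤
            Submodule.comap L (⨆ μ ∈ T, cwtSpace A H V μ) := by
          refine iSup₂_le fun μ hμ z hz => ?_
          have : L z ∈ cwtSpace A H V μ := by
            rw [hLapp μ z hz]
            exact Submodule.smul_mem _ _ hz
          have hle : cwtSpace A H V μ ≤ ⨆ μ ∈ T, cwtSpace A H V μ := le_iSup₂ (f := fun μ (_ : μ ∈ T) => cwtSpace A H V μ) μ hμ
          exact Submodule.mem_comap.mpr (hle this)
        exact hsub hu
      rw [← hwu, map_add, hLw, zero_add]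
      exact hLu
    have e1 : L v = (χ h₀ - μ₀ h₀) • v := hLapp χ v hv
    have := ih hχT (Submodule.smul_mem _ _ hv) (e1 ▸ e2)
    rcases smul_eq_zero.mp this with h | h
    · exact absurd (sub_eq_zero.mp h) hh₀
    · exact h

lemma cwt_disjoint_set (Tset : Set (Module.Dual ℂ H)) {χ : Module.Dual ℂ H} (hχ : χ ∉ Tset)
    {v : V} (hv : v ∈ cwtSpace A H V χ) (hv' : v ∈ ⨆ μ ∈ Tset, cwtSpace A H V μ) : v = 0 := by
  classical
  rw [iSup_subtype'] at hv'
  obtain ⟨f, hf, hfv⟩ := (Submodule.mem_iSup_iff_exists_finsupp _ _).mp hv'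
  set T : Finset (Module.Dual ℂ H) := f.support.image Subtype.val with hT
  refine cwt_disjoint_finset T (fun hmem => ?_) hv ?_
  · obtain ⟨i, _, hi⟩ := Finset.mem_image.mp hmem
    exact hχ (hi ▸ i.2)
  · rw [← hfv]
    refine Submodule.sum_mem _ fun i hi => ?_
    have hle : cwtSpace A H V i.1 ≤ ⨆ μ ∈ T, cwtSpace A H V μ :=
      le_iSup₂ (f := fun μ (_ : μ ∈ T) => cwtSpace A H V μ) i.1 (Finset.mem_image_of_mem _ hi)
    exact hle (hf i)


lemma weights_finite [FiniteDimensional ℂ V] :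
    {χ : Module.Dual ℂ H | cwtSpace A H V χ ≠ ⊥}.Finite := by
  classical
  rw [← Set.finite_coe_iff]
  set S := {χ : Module.Dual ℂ H | cwtSpace A H V χ ≠ ⊥} with hS
  have hv : ∀ χ : S, ∃ w : V, w ∈ cwtSpace A H V χ.1 ∧ w ≠ 0 := by
    intro χ
    obtain ⟨w, hw, hw0⟩ := (Submodule.ne_bot_iff _).mp χ.2
    exact ⟨w, hw, hw0⟩
  choose v hv hv0 using hv
  have hli : LinearIndependent ℂ v := by
    rw [linearIndependent_iff']
    intro s c hsum i hi
    by_contra hci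
    have h1 : c i • v i = -∑ j ∈ s.erase i, c j • v j := by
      have h2 := Finset.sum_erase_add s (fun j => c j • v j) hi
      rw [hsum] at h2
      linear_combination (norm := module) h2
    set Tset : Set (Module.Dual ℂ H) := ↑((s.erase i).image (fun j => j.1)) with hTset
    have hnotmem : (i : S).1 ∉ Tset := by
      intro hmem
      obtain ⟨j, hj, hji⟩ := Finset.mem_image.mp hmem
      exact Finset.ne_of_mem_erase hj (Subtype.ext hji)
    have hmem2 : c i • v i ∈ ⨆ μ ∈ Tset, cwtSpace A H V μ := by
      rw [h1]
      refine Submodule.neg_mem _ (Submodule.sum_mem _ fun j hj => ?_)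
      have hle : cwtSpace A H V j.1 ≤ ⨆ μ ∈ Tset, cwtSpace A H V μ :=
        le_iSup₂ (f := fun μ (_ : μ ∈ Tset) => cwtSpace A H V μ) j.1
          (by exact_mod_cast Finset.mem_image_of_mem (fun j => j.1) hj)
      exact hle (Submodule.smul_mem _ _ (hv j))
    have := cwt_disjoint_set Tset hnotmem (Submodule.smul_mem _ _ (hv i)) hmem2
    rcases smul_eq_zero.mp this with h | h
    · exact hci h
    · exact hv0 i h
  exact hli.finite

lemma mem_closure_range_iff {M : Type*} [AddCommMonoid M] {n : ℕ} {α : Fin n → M}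
    {q : M} :
    q ∈ AddSubmonoid.closure (Set.range α) ↔ ∃ c : Fin n → ℕ, q = ∑ i, c i • α i := by
  constructor
  · intro hq
    induction hq using AddSubmonoid.closure_induction with
    | mem x hx =>
      obtain ⟨i, rfl⟩ := hx
      refine ⟨fun j => if j = i then 1 else 0, ?_⟩
      simp [ite_smul]
    | zero => exact ⟨0, by simp⟩
    | add x y _ _ hx hy =>
      obtain ⟨c, rfl⟩ := hx
      obtain ⟨c', rfl⟩ := hy
      exact ⟨c + c', by simp [add_smul, Finset.sum_add_distrib]⟩
  · rintro ⟨c, rfl⟩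
    refine AddSubmonoid.sum_mem _ fun i _ => ?_
    exact (AddSubmonoid.closure _).nsmul_mem (AddSubmonoid.subset_closure (Set.mem_range_self i)) (c i)

lemma closure_antisymm {W : Type*} [AddCommGroup W] [Module ℂ W] {n : ℕ} {α : Fin n → W}
    (hα : LinearIndependent ℂ α) {q q' : W}
    (hq : q ∈ AddSubmonoid.closure (Set.range α))
    (hq' : q' ∈ AddSubmonoid.closure (Set.range α)) (h : q + q' = 0) : q = 0 := by
  obtain ⟨c, rfl⟩ := mem_closure_range_iff.mp hq
  obtain ⟨c', rfl⟩ := mem_closure_range_iff.mp hq'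
  have hsum : ∑ i, (((c i + c' i : ℕ) : ℂ)) • α i = 0 := by
    rw [← h]
    rw [← Finset.sum_add_distrib]
    congr 1
    ext i
    rw [Nat.cast_smul_eq_nsmul, add_smul]
  have hz := Fintype.linearIndependent_iff.mp hα _ hsum
  have hc : ∀ i, c i = 0 := by
    intro i
    have := hz i
    exact_mod_cast Nat.eq_zero_of_add_eq_zero_right (by exact_mod_cast this)
  simp [hc]

lemma exists_maximal_finset {M : Type*} [AddCommGroup M] (Q : AddSubmonoid M)
    (hQ : ∀ q ∈ Q, ∀ q' ∈ Q, q + q' = 0 → q = 0)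
    (s : Finset M) : s.Nonempty → ∃ lam ∈ s, ∀ μ ∈ s, μ - lam ∈ Q → μ = lam := by
  classical
  induction s using Finset.induction with
  | empty => intro hs; simp at hs
  | @insert a t hat ih =>
    intro _
    rcases t.eq_empty_or_nonempty with rfl | ht
    · exact ⟨a, Finset.mem_insert_self a _, fun μ hμ _ => by simpa using hμ⟩
    · obtain ⟨lam, hlamt, hmax⟩ := ih ht
      by_cases hc : a - lam ∈ Q
      · refine ⟨a, Finset.mem_insert_self _ _, ?_⟩
        intro μ hμ hμa
        rcases Finset.mem_insert.mp hμ with rfl | hμt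
        · rfl
        · have h1 : μ - lam ∈ Q := by
            have h2 := Q.add_mem hμa hc
            rwa [sub_add_sub_cancel] at h2
          have h2 : μ = lam := hmax μ hμt h1
          have h3 : a - lam = 0 := by
            refine hQ _ hc _ (by rw [h2] at hμa; exact hμa) ?_
            abel
          have h4 : a = lam := by rwa [sub_eq_zero] at h3
          rw [h2, h4]
      · refine ⟨lam, Finset.mem_insert_of_mem hlamt, ?_⟩
        intro μ hμ hμl
        rcases Finset.mem_insert.mp hμ with rfl | hμt
        · exact absurd hμl hc
        · exact hmax μ hμt hμl


lemma wt_vanish [FiniteDimensional ℂ g] [H.IsCartanSubalgebra]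
    {β : Module.Dual ℂ H} (hne : wtSpace H g β ≠ ⊥) (h h' : H) : β ⁅h, h'⁆ = 0 := by
  have hgen : LieModule.genWeightSpace g (⇑β : H → ℂ) ≠ ⊥ := by
    obtain ⟨x, hx, hx0⟩ := (Submodule.ne_bot_iff _).mp hne
    intro hcon
    have hxmem : x ∈ LieModule.genWeightSpace g (⇑β : H → ℂ) := by
      rw [LieModule.mem_genWeightSpace]
      intro hh
      refine ⟨1, ?_⟩
      rw [pow_one, LinearMap.sub_apply, LieModule.toEnd_apply_apply,
        LieSubalgebra.coe_bracket_of_module, hx hh]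
      simp
    rw [hcon] at hxmem
    exact hx0 (by simpa using hxmem)
  exact LieModule.LinearWeights.map_lie (⇑β : H → ℂ) hgen h h'

lemma H_abelian [FiniteDimensional ℂ g] [LieAlgebra.IsSimple ℂ g] [H.IsCartanSubalgebra]
    {Rplus : Set (Module.Dual ℂ H)} {npos nneg : LieSubalgebra ℂ g}
    (hnpos : npos.toSubmodule = ⨆ β ∈ Rplus, wtSpace H g β)
    (hnneg : nneg.toSubmodule = ⨆ β ∈ Rplus, wtSpace H g (-β))
    (hdecg : nneg.toSubmodule ⊔ H.toSubmodule ⊔ npos.toSubmodule = ⊤) :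
    ∀ h h' : H, ⁅(h : g), (h' : g)⁆ = 0 := by
  classical
  -- brackets of `H` kill the root spaces
  have C1 : ∀ (d : H) (_ : ∃ h h' : H, d = ⁅h, h'⁆) (x : g), x ∈ npos.toSubmodule →
      ⁅(d : g), x⁆ = 0 := by
    rintro d ⟨h, h', rfl⟩ x hx
    rw [hnpos] at hx
    have hker : (⨆ β ∈ Rplus, wtSpace H g β) ≤ LinearMap.ker (LieAlgebra.ad ℂ g (↑⁅h, h'⁆ : g)) := by
      refine iSup₂_le fun β hβ z hz => ?_
      rw [LinearMap.mem_ker, LieAlgebra.ad_apply]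
      by_cases hz0 : z = 0
      · simp [hz0]
      · have hne : wtSpace H g β ≠ ⊥ := Submodule.ne_bot_iff _ |>.mpr ⟨z, hz, hz0⟩
        rw [hz ⁅h, h'⁆, wt_vanish hne h h', zero_smul]
    have := hker hx
    rwa [LinearMap.mem_ker, LieAlgebra.ad_apply] at this
  have C2 : ∀ (d : H) (_ : ∃ h h' : H, d = ⁅h, h'⁆) (x : g), x ∈ nneg.toSubmodule →
      ⁅(d : g), x⁆ = 0 := by
    rintro d ⟨h, h', rfl⟩ x hx
    rw [hnneg] at hx
    have hker : (⨆ β ∈ Rplus, wtSpace H g (-β)) ≤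
        LinearMap.ker (LieAlgebra.ad ℂ g (↑⁅h, h'⁆ : g)) := by
      refine iSup₂_le fun β hβ z hz => ?_
      rw [LinearMap.mem_ker, LieAlgebra.ad_apply]
      by_cases hz0 : z = 0
      · simp [hz0]
      · have hne : wtSpace H g (-β) ≠ ⊥ := Submodule.ne_bot_iff _ |>.mpr ⟨z, hz, hz0⟩
        rw [hz ⁅h, h'⁆, wt_vanish hne h h', zero_smul]
    have := hker hx
    rwa [LinearMap.mem_ker, LieAlgebra.ad_apply] at this
  set Dgen : Set g := {z | ∃ h h' : H, z = ⁅(h : g), (h' : g)⁆} with hDgen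
  set D : Submodule ℂ g := Submodule.span ℂ Dgen with hD
  have hDle : D ≤ H.toSubmodule := by
    rw [hD, Submodule.span_le]
    rintro z ⟨h, h', rfl⟩
    exact H.lie_mem h.2 h'.2
  have hlie : ∀ (x : g) {m : g}, m ∈ D → ⁅x, m⁆ ∈ D := by
    intro x
    have : D ≤ Submodule.comap (LieAlgebra.ad ℂ g x) D := by
      rw [hD, Submodule.span_le]
      rintro z ⟨h, h', rfl⟩
      simp only [SetLike.mem_coe, Submodule.mem_comap, LieAlgebra.ad_apply]
      have hx : x ∈ nneg.toSubmodule ⊔ H.toSubmodule ⊔ npos.toSubmodule := by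
        rw [hdecg]; trivial
      obtain ⟨y, hy, w, hw, rfl⟩ := Submodule.mem_sup.mp hx
      obtain ⟨u, hu, c, hc, rfl⟩ := Submodule.mem_sup.mp hy
      have hz : (⁅(h : g), (h' : g)⁆ : g) = ((⁅h, h'⁆ : H) : g) :=
        (LieSubalgebra.coe_bracket H h h').symm
      rw [add_lie, add_lie]
      have e1 : ⁅u, (⁅(h : g), (h' : g)⁆ : g)⁆ = 0 := by
        rw [hz, ← lie_skew, C2 ⁅h, h'⁆ ⟨h, h', rfl⟩ u hu, neg_zero]
      have e3 : ⁅w, (⁅(h : g), (h' : g)⁆ : g)⁆ = 0 := by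
        rw [hz, ← lie_skew, C1 ⁅h, h'⁆ ⟨h, h', rfl⟩ w hw, neg_zero]
      have e2 : ⁅c, (⁅(h : g), (h' : g)⁆ : g)⁆ ∈ D := by
        rw [leibniz_lie]
        refine Submodule.add_mem _ ?_ ?_
        · refine Submodule.subset_span ⟨⟨⁅c, (h : g)⁆, ?_⟩, h', ?_⟩
          · exact H.lie_mem hc h.2
          · rfl
        · refine Submodule.subset_span ⟨h, ⟨⁅c, (h' : g)⁆, ?_⟩, ?_⟩
          · exact H.lie_mem hc h'.2
          · rfl
      rw [e1, e3, zero_add, add_zero]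
      exact e2
    intro m hm
    have := this hm
    rwa [Submodule.mem_comap, LieAlgebra.ad_apply] at this
  set J : LieIdeal ℂ g := { D with lie_mem := fun {x m} hm => hlie x hm } with hJ
  have hgenJ : ∀ h h' : H, ⁅(h : g), (h' : g)⁆ ∈ J := fun h h' =>
    Submodule.subset_span ⟨h, h', rfl⟩
  rcases LieAlgebra.IsSimple.eq_bot_or_eq_top J with hbot | htop
  · intro h h'
    have := hgenJ h h'
    rw [hbot] at this
    exact (LieSubmodule.mem_bot _).mp this
  · exfalso
    have hHtop : H.toSubmodule = ⊤ := by
      have h1 : D = ⊤ := by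
        rw [show D = J.toSubmodule from rfl, htop, LieSubmodule.top_toSubmodule]
      exact top_le_iff.mp (h1 ▸ hDle)
    have hsurj : Function.Surjective (H.incl : H →ₗ⁅ℂ⁆ g) := by
      intro x
      have hx : x ∈ H := by
        have : x ∈ H.toSubmodule := by rw [hHtop]; trivial
        exact this
      exact ⟨⟨x, hx⟩, rfl⟩
    have hnil : LieRing.IsNilpotent g := hsurj.lieAlgebra_isNilpotent
    have hnontriv : Nontrivial g := by
      by_contra hcon
      rw [not_nontrivial_iff_subsingleton] at hcon
      exact LieAlgebra.IsSimple.non_abelian ℂ (L := g)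
        ⟨fun x y => Subsingleton.elim _ _⟩
    have hcent : Nontrivial (LieAlgebra.center ℂ g) :=
      LieAlgebra.non_trivial_center_of_isNilpotent (R := ℂ) (L := g)
    have hcbot : LieAlgebra.center ℂ g = ⊥ := LieAlgebra.center_eq_bot ℂ g
    rw [hcbot] at hcent
    obtain ⟨a, b, hab⟩ := hcent
    exact hab (Subtype.ext (by
      have ha := (LieSubmodule.mem_bot _).mp a.2
      have hb := (LieSubmodule.mem_bot _).mp b.2
      rw [ha, hb]))


/-- Vectors obtained from `v₀` by repeatedly applying operators `a ⊗ x` with `x ∈ Sg`. -/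
inductive IsWord (Sg : Set g) (v₀ : V) : V → Prop
  | base : IsWord Sg v₀ v₀
  | app (a : A) {x : g} (hx : x ∈ Sg) {w : V} (hw : IsWord Sg v₀ w) :
      IsWord Sg v₀ ⁅(a ⊗ₜ[ℂ] x : A ⊗[ℂ] g), w⁆

lemma wordSpan_lie {Sg : Set g} {v₀ : V} (a : A) {x : g} (hx : x ∈ Sg) {w : V}
    (hw : w ∈ Submodule.span ℂ {w | IsWord (A := A) Sg v₀ w}) :
    ⁅(a ⊗ₜ[ℂ] x : A ⊗[ℂ] g), w⁆ ∈ Submodule.span ℂ {w | IsWord (A := A) Sg v₀ w} := by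
  set W := Submodule.span ℂ {w | IsWord (A := A) Sg v₀ w} with hW
  have hle : W ≤ Submodule.comap
      (LieModule.toEnd ℂ (A ⊗[ℂ] g) V (a ⊗ₜ[ℂ] x) : V →ₗ[ℂ] V) W := by
    rw [hW, Submodule.span_le]
    intro u hu
    simp only [SetLike.mem_coe, Submodule.mem_comap, LieModule.toEnd_apply_apply]
    exact Submodule.subset_span (hu.app a hx)
  have := hle hw
  rwa [Submodule.mem_comap, LieModule.toEnd_apply_apply] at this

end Aux
/-- Let `g` be a finite-dimensional complex simple Lie algebra with triangular
decomposition `g = n⁻ ⊕ h ⊕ n⁺`, `A` a commutative unital `ℂ`-algebra, and `V` a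
finite-dimensional irreducible `g⊗A`-module which is a sum of weight spaces.
Then there is a weight `λ` of `V` with `dim V_λ = 1` and `wt(V) ⊆ λ − Q⁺`. -/
theorem stmt8 (g : Type*) [LieRing g] [LieAlgebra ℂ g]
    [FiniteDimensional ℂ g] [LieAlgebra.IsSimple ℂ g]
    (H : LieSubalgebra ℂ g) [H.IsCartanSubalgebra]
    (n : ℕ) (α : Fin n → Module.Dual ℂ H) (hα : LinearIndependent ℂ α)
    (Rplus : Set (Module.Dual ℂ H))
    (hR : ∀ β ∈ Rplus, β ∈ AddSubmonoid.closure (Set.range α) ∧ β ≠ 0)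
    (npos nneg : LieSubalgebra ℂ g)
    (hnpos : npos.toSubmodule = ⨆ β ∈ Rplus, wtSpace H g β)
    (hnneg : nneg.toSubmodule = ⨆ β ∈ Rplus, wtSpace H g (-β))
    (hdecg : nneg.toSubmodule ⊔ H.toSubmodule ⊔ npos.toSubmodule = ⊤)
    (A : Type*) [CommRing A] [Algebra ℂ A]
    (V : Type*) [AddCommGroup V] [Module ℂ V] [FiniteDimensional ℂ V]
    [LieRingModule (A ⊗[ℂ] g) V] [LieModule ℂ (A ⊗[ℂ] g) V]
    (hirr : LieModule.IsIrreducible ℂ (A ⊗[ℂ] g) V)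
    (hdecomp : ⨆ χ : Module.Dual ℂ H, cwtSpace A H V χ = ⊤) :
    ∃ lam : Module.Dual ℂ H, cwtSpace A H V lam ≠ ⊥ ∧
      Module.finrank ℂ (cwtSpace A H V lam) = 1 ∧
      ∀ χ : Module.Dual ℂ H, cwtSpace A H V χ ≠ ⊥ →
        lam - χ ∈ AddSubmonoid.closure (Set.range α) := by
  classical
  haveI := hirr
  haveI : Nontrivial V := LieModule.nontrivial_of_isIrreducible ℂ (A ⊗[ℂ] g) V
  set Q := AddSubmonoid.closure (Set.range α) with hQdef
  have hQanti : ∀ q ∈ Q, ∀ q' ∈ Q, q + q' = 0 → q = 0 := fun q hq q' hq' h =>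
    closure_antisymm hα hq hq' h
  have hab : ∀ h h' : H, ⁅(h : g), (h' : g)⁆ = 0 := H_abelian hnpos hnneg hdecg
  have hH0 : ∀ {x : g}, x ∈ H → x ∈ wtSpace H g (0 : Module.Dual ℂ H) := by
    intro x hx
    intro h'
    rw [hab h' ⟨x, hx⟩]
    simp
  -- the set of weights is finite and nonempty
  set S : Set (Module.Dual ℂ H) := {χ | cwtSpace A H V χ ≠ ⊥} with hSdef
  have hSfin : S.Finite := weights_finite
  have hSne : S.Nonempty := by
    obtain ⟨x, hx0⟩ := exists_ne (0 : V)
    by_contra hcon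
    rw [Set.not_nonempty_iff_eq_empty] at hcon
    have hbot : ⨆ χ : Module.Dual ℂ H, cwtSpace A H V χ = ⊥ := by
      refine iSup_eq_bot.mpr fun χ => ?_
      by_contra hne
      have : χ ∈ S := hne
      rw [hcon] at this
      exact this
    rw [hdecomp] at hbot
    have : x ∈ (⊥ : Submodule ℂ V) := by rw [← hbot]; trivial
    exact hx0 (Submodule.mem_bot ℂ |>.mp this)
  obtain ⟨lam, hlamS, hmax'⟩ := exists_maximal_finset Q hQanti hSfin.toFinset
    (hSfin.toFinset_nonempty.mpr hSne)
  rw [Set.Finite.mem_toFinset] at hlamS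
  have hmax : ∀ μ, cwtSpace A H V μ ≠ ⊥ → μ - lam ∈ Q → μ = lam := fun μ hμ hq =>
    hmax' μ (hSfin.mem_toFinset.mpr hμ) hq
  have hlam : cwtSpace A H V lam ≠ ⊥ := hlamS
  -- weight spaces above the maximal weight vanish
  have htopwt : ∀ β ∈ Rplus, cwtSpace A H V (lam + β) = ⊥ := by
    intro β hβ
    by_contra hne
    have h1 : (lam + β) - lam ∈ Q := by
      rw [add_sub_cancel_left]
      exact (hR β hβ).1
    have h2 := hmax _ hne h1
    have h3 : β = 0 := by
      have := congrArg (fun ξ => ξ - lam) h2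
      simpa [add_sub_cancel_left] using this
    exact (hR β hβ).2 h3
  -- positive part kills the top weight space
  have hkill : ∀ (b : A) (v : V), v ∈ cwtSpace A H V lam → ∀ {y : g},
      y ∈ npos.toSubmodule → ⁅(b ⊗ₜ[ℂ] y : A ⊗[ℂ] g), v⁆ = 0 := by
    intro b v hv
    have hle : npos.toSubmodule ≤ LinearMap.ker (lieTmulLeft b v) := by
      rw [hnpos]
      refine iSup₂_le fun β hβ y hy => ?_
      simp only [SetLike.mem_coe, LinearMap.mem_ker, lieTmulLeft_apply]
      have hsh := cwt_shift hy b hv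
      rw [htopwt β hβ] at hsh
      simpa using hsh
    intro y hy
    have := hle hy
    rwa [LinearMap.mem_ker, lieTmulLeft_apply] at this
  -- the H-part preserves weight spaces
  have hHpres : ∀ (a : A) {x : g}, x ∈ H → ∀ {χ : Module.Dual ℂ H} {v : V},
      v ∈ cwtSpace A H V χ → ⁅(a ⊗ₜ[ℂ] x : A ⊗[ℂ] g), v⁆ ∈ cwtSpace A H V χ := by
    intro a x hx χ v hv
    have := cwt_shift (hH0 hx) a hv
    rwa [add_zero] at this
  set Sfull : Set g := {x | x ∈ nneg ∨ x ∈ H} with hSfull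
  set SH : Set g := {x | x ∈ H} with hSH
  -- brackets with the positive part send words into the span of words
  have hword_npos : ∀ {v₀ : V}, v₀ ∈ cwtSpace A H V lam → ∀ {w : V},
      IsWord (A := A) Sfull v₀ w → ∀ (b : A) {y : g}, y ∈ npos.toSubmodule →
      ⁅(b ⊗ₜ[ℂ] y : A ⊗[ℂ] g), w⁆ ∈
        Submodule.span ℂ {w | IsWord (A := A) Sfull v₀ w} := by
    intro v₀ hv₀ w hw
    induction hw with
    | base =>
      intro b y hy
      rw [hkill b v₀ hv₀ hy]
      exact Submodule.zero_mem _
    | app a hx hw' ih =>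
      rename_i x w'
      intro b y hy
      rw [leibniz_lie]
      refine Submodule.add_mem _ ?_ (wordSpan_lie a hx (ih b hy))
      rw [LieAlgebra.ExtendScalars.bracket_tmul]
      have hz : (⁅y, x⁆ : g) ∈ nneg.toSubmodule ⊔ H.toSubmodule ⊔ npos.toSubmodule := by
        rw [hdecg]; trivial
      obtain ⟨y1, hy1, p, hp, hyp⟩ := Submodule.mem_sup.mp hz
      obtain ⟨u, hu, c0, hc0, rfl⟩ := Submodule.mem_sup.mp hy1
      rw [← hyp, tmul_add, tmul_add, add_lie, add_lie]
      refine Submodule.add_mem _ (Submodule.add_mem _ ?_ ?_) ?_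
      · exact Submodule.subset_span (hw'.app (b * a) (show u ∈ Sfull from Or.inl hu))
      · exact Submodule.subset_span (hw'.app (b * a) (show c0 ∈ Sfull from Or.inr hc0))
      · exact ih (b * a) hp
  -- brackets with arbitrary pure tensors send words into the span of words
  have hword_all : ∀ {v₀ : V}, v₀ ∈ cwtSpace A H V lam → ∀ {w : V},
      IsWord (A := A) Sfull v₀ w → ∀ (c : A) (z : g),
      ⁅(c ⊗ₜ[ℂ] z : A ⊗[ℂ] g), w⁆ ∈
        Submodule.span ℂ {w | IsWord (A := A) Sfull v₀ w} := by
    intro v₀ hv₀ w hw c z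
    have hz : z ∈ nneg.toSubmodule ⊔ H.toSubmodule ⊔ npos.toSubmodule := by
      rw [hdecg]; trivial
    obtain ⟨y1, hy1, p, hp, hyp⟩ := Submodule.mem_sup.mp hz
    obtain ⟨u, hu, c0, hc0, rfl⟩ := Submodule.mem_sup.mp hy1
    rw [← hyp, tmul_add, tmul_add, add_lie, add_lie]
    refine Submodule.add_mem _ (Submodule.add_mem _ ?_ ?_) ?_
    · exact Submodule.subset_span (hw.app c (show u ∈ Sfull from Or.inl hu))
    · exact Submodule.subset_span (hw.app c (show c0 ∈ Sfull from Or.inr hc0))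
    · exact hword_npos hv₀ hw c hp
  -- the span of words is a Lie submodule
  have hWlie : ∀ {v₀ : V}, v₀ ∈ cwtSpace A H V lam → ∀ (t : A ⊗[ℂ] g) {w : V},
      w ∈ Submodule.span ℂ {w | IsWord (A := A) Sfull v₀ w} →
      ⁅t, w⁆ ∈ Submodule.span ℂ {w | IsWord (A := A) Sfull v₀ w} := by
    intro v₀ hv₀ t w hw
    have hle : Submodule.span ℂ {w | IsWord (A := A) Sfull v₀ w} ≤
        Submodule.comap (LieModule.toEnd ℂ (A ⊗[ℂ] g) V t : V →ₗ[ℂ] V)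
          (Submodule.span ℂ {w | IsWord (A := A) Sfull v₀ w}) := by
      rw [Submodule.span_le]
      intro u hu
      simp only [SetLike.mem_coe, Submodule.mem_comap, LieModule.toEnd_apply_apply]
      induction t using TensorProduct.induction_on with
      | zero => rw [zero_lie]; exact Submodule.zero_mem _
      | tmul c z => exact hword_all hv₀ hu c z
      | add t1 t2 h1 h2 => rw [add_lie]; exact Submodule.add_mem _ h1 h2
    have := hle hw
    rwa [Submodule.mem_comap, LieModule.toEnd_apply_apply] at this
  -- by irreducibility, the span of words is everything
  have hWtop : ∀ {v₀ : V}, v₀ ∈ cwtSpace A H V lam → v₀ ≠ 0 →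
      Submodule.span ℂ {w | IsWord (A := A) Sfull v₀ w} = ⊤ := by
    intro v₀ hv₀ hv₀0
    set W := Submodule.span ℂ {w | IsWord (A := A) Sfull v₀ w} with hW
    set WL : LieSubmodule ℂ (A ⊗[ℂ] g) V :=
      { toSubmodule := W, lie_mem := fun {t u} hu => hWlie hv₀ t hu } with hWL
    rcases eq_bot_or_eq_top WL with hbot | htop
    · exfalso
      have hmem : v₀ ∈ WL := Submodule.subset_span IsWord.base
      rw [hbot] at hmem
      exact hv₀0 ((LieSubmodule.mem_bot _).mp hmem)
    · have h1 : W = ⊤ := by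
        rw [show W = WL.toSubmodule from rfl, htop, LieSubmodule.top_toSubmodule]
      exact h1
  -- weights of V lie below lam
  set TQ : Set (Module.Dual ℂ H) := {μ | ∃ q ∈ Q, μ = lam - q} with hTQ
  set X : Submodule ℂ V := ⨆ μ ∈ TQ, cwtSpace A H V μ with hX
  have hlamX : cwtSpace A H V lam ≤ X := by
    have hmem : lam ∈ TQ := ⟨0, zero_mem _, by rw [sub_zero]⟩
    exact le_iSup₂ (f := fun μ (_ : μ ∈ TQ) => cwtSpace A H V μ) lam hmem
  have hXH : ∀ (a : A) {x : g}, x ∈ H → ∀ {w : V}, w ∈ X →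
      ⁅(a ⊗ₜ[ℂ] x : A ⊗[ℂ] g), w⁆ ∈ X := by
    intro a x hx w hw
    have hle : X ≤ Submodule.comap
        (LieModule.toEnd ℂ (A ⊗[ℂ] g) V (a ⊗ₜ[ℂ] x) : V →ₗ[ℂ] V) X := by
      refine iSup₂_le fun μ hμ z hz => ?_
      rw [Submodule.mem_comap, LieModule.toEnd_apply_apply]
      exact le_iSup₂ (f := fun μ (_ : μ ∈ TQ) => cwtSpace A H V μ) μ hμ (hHpres a hx hz)
    have := hle hw
    rwa [Submodule.mem_comap, LieModule.toEnd_apply_apply] at this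
  have hXneg : ∀ (a : A) {x : g}, x ∈ nneg.toSubmodule → ∀ {w : V}, w ∈ X →
      ⁅(a ⊗ₜ[ℂ] x : A ⊗[ℂ] g), w⁆ ∈ X := by
    have P1 : ∀ (a : A) (μ : Module.Dual ℂ H), μ ∈ TQ → ∀ (w : V), w ∈ cwtSpace A H V μ →
        ∀ {x : g}, x ∈ nneg.toSubmodule → ⁅(a ⊗ₜ[ℂ] x : A ⊗[ℂ] g), w⁆ ∈ X := by
      intro a μ hμ w hw
      have hle : nneg.toSubmodule ≤ Submodule.comap (lieTmulLeft a w) X := by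
        rw [hnneg]
        refine iSup₂_le fun β hβ x hx => ?_
        simp only [SetLike.mem_coe, Submodule.mem_comap, lieTmulLeft_apply]
        have hsh := cwt_shift hx a hw
        obtain ⟨q, hq, rfl⟩ := hμ
        have heq : (lam - q) + (-β) = lam - (q + β) := by abel
        rw [heq] at hsh
        have hmem : lam - (q + β) ∈ TQ := ⟨q + β, Q.add_mem hq (hR β hβ).1, rfl⟩
        exact le_iSup₂ (f := fun μ (_ : μ ∈ TQ) => cwtSpace A H V μ) _ hmem hsh
      intro x hx
      have := hle hx
      rwa [Submodule.mem_comap, lieTmulLeft_apply] at this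
    intro a x hx w hw
    have hle : X ≤ Submodule.comap
        (LieModule.toEnd ℂ (A ⊗[ℂ] g) V (a ⊗ₜ[ℂ] x) : V →ₗ[ℂ] V) X := by
      refine iSup₂_le fun μ hμ z hz => ?_
      rw [Submodule.mem_comap, LieModule.toEnd_apply_apply]
      exact P1 a μ hμ z hz hx
    have := hle hw
    rwa [Submodule.mem_comap, LieModule.toEnd_apply_apply] at this
  have hword_X : ∀ {v₀ : V}, v₀ ∈ cwtSpace A H V lam → ∀ {w : V},
      IsWord (A := A) Sfull v₀ w → w ∈ X := by
    intro v₀ hv₀ w hw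
    induction hw with
    | base => exact hlamX hv₀
    | app a hx hw' ih =>
      rcases hx with hx | hx
      · exact hXneg a hx ih
      · exact hXH a hx ih
  -- third conclusion
  have hconc3 : ∀ χ : Module.Dual ℂ H, cwtSpace A H V χ ≠ ⊥ → lam - χ ∈ Q := by
    obtain ⟨v₀, hv₀, hv₀0⟩ := (Submodule.ne_bot_iff _).mp hlam
    have hXtop : (⊤ : Submodule ℂ V) ≤ X := by
      rw [← hWtop hv₀ hv₀0, Submodule.span_le]
      exact fun w hw => hword_X hv₀ hw
    intro χ hχ
    obtain ⟨v, hv, hv0⟩ := (Submodule.ne_bot_iff _).mp hχ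
    by_cases hmem : χ ∈ TQ
    · obtain ⟨q, hq, rfl⟩ := hmem
      rwa [sub_sub_cancel]
    · exact absurd (cwt_disjoint_set TQ hmem hv (hXtop Submodule.mem_top)) hv0
  -- now the one-dimensionality
  set T0 : Set (Module.Dual ℂ H) := {μ | μ ≠ lam} with hT0
  set X0 : Submodule ℂ V := ⨆ μ ∈ T0, cwtSpace A H V μ with hX0
  have hX0H : ∀ (a : A) {x : g}, x ∈ H → ∀ {w : V}, w ∈ X0 →
      ⁅(a ⊗ₜ[ℂ] x : A ⊗[ℂ] g), w⁆ ∈ X0 := by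
    intro a x hx w hw
    have hle : X0 ≤ Submodule.comap
        (LieModule.toEnd ℂ (A ⊗[ℂ] g) V (a ⊗ₜ[ℂ] x) : V →ₗ[ℂ] V) X0 := by
      refine iSup₂_le fun μ hμ z hz => ?_
      rw [Submodule.mem_comap, LieModule.toEnd_apply_apply]
      exact le_iSup₂ (f := fun μ (_ : μ ∈ T0) => cwtSpace A H V μ) μ hμ (hHpres a hx hz)
    have := hle hw
    rwa [Submodule.mem_comap, LieModule.toEnd_apply_apply] at this
  have hX0neg : ∀ (a : A) {x : g}, x ∈ nneg.toSubmodule → ∀ {w : V}, w ∈ X0 →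
      ⁅(a ⊗ₜ[ℂ] x : A ⊗[ℂ] g), w⁆ ∈ X0 := by
    have P1 : ∀ (a : A) (μ : Module.Dual ℂ H), μ ∈ T0 → ∀ (w : V), w ∈ cwtSpace A H V μ →
        ∀ (x : g), x ∈ nneg.toSubmodule → ⁅(a ⊗ₜ[ℂ] x : A ⊗[ℂ] g), w⁆ ∈ X0 := by
      intro a μ hμ w hw x hx
      by_cases hbot : cwtSpace A H V μ = ⊥
      · have hw0 : w = 0 := by
          rw [hbot] at hw
          simpa using hw
        rw [hw0, lie_zero]
        exact Submodule.zero_mem _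
      · have hle : nneg.toSubmodule ≤ Submodule.comap (lieTmulLeft a w) X0 := by
          rw [hnneg]
          refine iSup₂_le fun β hβ x hx => ?_
          simp only [SetLike.mem_coe, Submodule.mem_comap, lieTmulLeft_apply]
          have hsh := cwt_shift hx a hw
          have hne : μ + (-β) ≠ lam := by
            intro heq
            have hμβ : μ = lam + β := by
              rw [← heq]; abel
            have hQβ : μ - lam ∈ Q := by
              rw [hμβ, add_sub_cancel_left]
              exact (hR β hβ).1
            exact hμ (hmax μ hbot hQβ)
          exact le_iSup₂ (f := fun μ (_ : μ ∈ T0) => cwtSpace A H V μ) _ hne hsh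
        have := hle hx
        rwa [Submodule.mem_comap, lieTmulLeft_apply] at this
    intro a x hx w hw
    have hle : X0 ≤ Submodule.comap
        (LieModule.toEnd ℂ (A ⊗[ℂ] g) V (a ⊗ₜ[ℂ] x) : V →ₗ[ℂ] V) X0 := by
      refine iSup₂_le fun μ hμ z hz => ?_
      rw [Submodule.mem_comap, LieModule.toEnd_apply_apply]
      exact P1 a μ hμ z hz x hx
    have := hle hw
    rwa [Submodule.mem_comap, LieModule.toEnd_apply_apply] at this
  have hnneg_lam : ∀ (a : A) {x : g}, x ∈ nneg.toSubmodule → ∀ {w : V},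
      w ∈ cwtSpace A H V lam → ⁅(a ⊗ₜ[ℂ] x : A ⊗[ℂ] g), w⁆ ∈ X0 := by
    intro a x hx w hw
    have hle : nneg.toSubmodule ≤ Submodule.comap (lieTmulLeft a w) X0 := by
      rw [hnneg]
      refine iSup₂_le fun β hβ x hx => ?_
      simp only [SetLike.mem_coe, Submodule.mem_comap, lieTmulLeft_apply]
      have hsh := cwt_shift hx a hw
      have hne : lam + (-β) ≠ lam := by
        intro heq
        have : -β = 0 := by
          have := congrArg (fun ξ => ξ - lam) heq
          simpa using this
        exact (hR β hβ).2 (by simpa [neg_eq_zero] using this)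
      exact le_iSup₂ (f := fun μ (_ : μ ∈ T0) => cwtSpace A H V μ) _ hne hsh
    have := hle hx
    rwa [Submodule.mem_comap, lieTmulLeft_apply] at this
  have hWHsub : ∀ {v₀ : V}, v₀ ∈ cwtSpace A H V lam → ∀ {w : V},
      IsWord (A := A) SH v₀ w → w ∈ cwtSpace A H V lam := by
    intro v₀ hv₀ w hw
    induction hw with
    | base => exact hv₀
    | app a hx hw' ih => exact hHpres a hx ih
  have hword_WX : ∀ {v₀ : V}, v₀ ∈ cwtSpace A H V lam → ∀ {w : V},
      IsWord (A := A) Sfull v₀ w →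
      w ∈ Submodule.span ℂ {w | IsWord (A := A) SH v₀ w} ⊔ X0 := by
    intro v₀ hv₀ w hw
    have hWHle : Submodule.span ℂ {w | IsWord (A := A) SH v₀ w} ≤ cwtSpace A H V lam :=
      Submodule.span_le.mpr fun u hu => hWHsub hv₀ hu
    induction hw with
    | base => exact Submodule.mem_sup_left (Submodule.subset_span IsWord.base)
    | app a hx hw' ih =>
      rename_i x w'
      obtain ⟨w1, hw1, w2, hw2, rfl⟩ := Submodule.mem_sup.mp ih
      rw [lie_add]
      refine Submodule.add_mem _ ?_ ?_
      · rcases hx with hx | hx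
        · exact Submodule.mem_sup_right (hnneg_lam a hx (hWHle hw1))
        · exact Submodule.mem_sup_left (wordSpan_lie a (show x ∈ SH from hx) hw1)
      · rcases hx with hx | hx
        · exact Submodule.mem_sup_right (hX0neg a hx hw2)
        · exact Submodule.mem_sup_right (hX0H a hx hw2)
  have hVlam_eq : ∀ {v₀ : V}, v₀ ∈ cwtSpace A H V lam → v₀ ≠ 0 →
      cwtSpace A H V lam = Submodule.span ℂ {w | IsWord (A := A) SH v₀ w} := by
    intro v₀ hv₀ hv₀0
    have hWHle : Submodule.span ℂ {w | IsWord (A := A) SH v₀ w} ≤ cwtSpace A H V lam :=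
      Submodule.span_le.mpr fun u hu => hWHsub hv₀ hu
    refine le_antisymm ?_ hWHle
    intro u hu
    have husup : u ∈ Submodule.span ℂ {w | IsWord (A := A) SH v₀ w} ⊔ X0 := by
      have h1 : (⊤ : Submodule ℂ V) ≤
          Submodule.span ℂ {w | IsWord (A := A) Sfull v₀ w} := le_of_eq (hWtop hv₀ hv₀0).symm
      have h2 : Submodule.span ℂ {w | IsWord (A := A) Sfull v₀ w} ≤
          Submodule.span ℂ {w | IsWord (A := A) SH v₀ w} ⊔ X0 :=
        Submodule.span_le.mpr fun w hw => hword_WX hv₀ hw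
      exact h2 (h1 Submodule.mem_top)
    obtain ⟨w1, hw1, w2, hw2, hu'⟩ := Submodule.mem_sup.mp husup
    have hw2lam : w2 ∈ cwtSpace A H V lam := by
      have he : w2 = u - w1 := by rw [← hu']; abel
      rw [he]
      exact Submodule.sub_mem _ hu (hWHle hw1)
    have hw20 : w2 = 0 := cwt_disjoint_set T0 (fun h => h rfl) hw2lam hw2
    rw [← hu', hw20, add_zero]
    exact hw1
  -- every `a ⊗ h` acts on the top weight space by a scalar
  obtain ⟨v₀, hv₀, hv₀0⟩ := (Submodule.ne_bot_iff _).mp hlam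
  have hscalar : ∀ (a : A) (h : H), ∃ c : ℂ, ∀ u ∈ cwtSpace A H V lam,
      ⁅(a ⊗ₜ[ℂ] (h : g) : A ⊗[ℂ] g), u⁆ = c • u := by
    intro a h
    set φ : V →ₗ[ℂ] V :=
      (LieModule.toEnd ℂ (A ⊗[ℂ] g) V (a ⊗ₜ[ℂ] (h : g)) : V →ₗ[ℂ] V) with hφ
    have hres : ∀ u ∈ cwtSpace A H V lam, φ u ∈ cwtSpace A H V lam := by
      intro u hu
      rw [hφ]
      have : φ u = ⁅(a ⊗ₜ[ℂ] (h : g) : A ⊗[ℂ] g), u⁆ := by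
        rw [hφ, LieModule.toEnd_apply_apply]
      rw [this]
      exact hHpres a h.2 hu
    set Tr : Module.End ℂ ↥(cwtSpace A H V lam) :=
      φ.restrict hres with hTr
    haveI : Nontrivial ↥(cwtSpace A H V lam) :=
      Submodule.nontrivial_iff_ne_bot.mpr hlam
    obtain ⟨c, hc⟩ := Module.End.exists_eigenvalue Tr
    obtain ⟨v1, hv1⟩ := hc.exists_hasEigenvector
    refine ⟨c, ?_⟩
    have hv1mem : (v1 : V) ∈ cwtSpace A H V lam := v1.2
    have hv1ne : (v1 : V) ≠ 0 := fun h0 => hv1.2 (Subtype.ext h0)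
    have hv1eig : φ (v1 : V) = c • (v1 : V) := by
      have h1 := hv1.apply_eq_smul
      have h2 : (Tr v1 : V) = φ (v1 : V) := LinearMap.restrict_coe_apply _ _ _
      rw [← h2, h1]
      rfl
    have hwordE : ∀ {w : V}, IsWord (A := A) SH (v1 : V) w → φ w = c • w := by
      intro w hw
      induction hw with
      | base => exact hv1eig
      | app a' hx hw' ih =>
        rename_i x w'
        have hφap : ∀ u : V, φ u = ⁅(a ⊗ₜ[ℂ] (h : g) : A ⊗[ℂ] g), u⁆ := fun u => by
          rw [hφ, LieModule.toEnd_apply_apply]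
        rw [hφap, leibniz_lie]
        have h1 : ⁅(a ⊗ₜ[ℂ] (h : g) : A ⊗[ℂ] g), (a' ⊗ₜ[ℂ] x : A ⊗[ℂ] g)⁆ = 0 := by
          rw [LieAlgebra.ExtendScalars.bracket_tmul, hab h ⟨x, hx⟩, tmul_zero]
        have h2 : ⁅(a ⊗ₜ[ℂ] (h : g) : A ⊗[ℂ] g), w'⁆ = c • w' := by
          rw [← hφap]
          exact ih
        rw [h1, zero_lie, zero_add, h2, lie_smul]
    intro u hu
    have heq := hVlam_eq hv1mem hv1ne
    have hle : cwtSpace A H V lam ≤ Module.End.eigenspace φ c := by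
      rw [heq, Submodule.span_le]
      intro w hw
      rw [SetLike.mem_coe, Module.End.mem_eigenspace_iff]
      exact hwordE hw
    have := Module.End.mem_eigenspace_iff.mp (hle hu)
    rw [hφ, LieModule.toEnd_apply_apply] at this
    exact this
  -- the top weight space is spanned by `v₀`
  have hspan : cwtSpace A H V lam = Submodule.span ℂ {v₀} := by
    have heq := hVlam_eq hv₀ hv₀0
    refine le_antisymm ?_ ?_
    · rw [heq, Submodule.span_le]
      intro w hw
      rw [SetLike.mem_coe]
      induction hw with
      | base => exact Submodule.subset_span rfl
      | app a hx hw' ih =>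
        rename_i x w'
        obtain ⟨c, hc⟩ := hscalar a ⟨x, hx⟩
        have hw'lam : w' ∈ cwtSpace A H V lam := hWHsub hv₀ hw'
        have he : ⁅(a ⊗ₜ[ℂ] x : A ⊗[ℂ] g), w'⁆ = c • w' := hc w' hw'lam
        rw [he]
        exact Submodule.smul_mem _ _ ih
    · rw [Submodule.span_le, Set.singleton_subset_iff]
      exact hv₀
  have hrank : Module.finrank ℂ ↥(cwtSpace A H V lam) = 1 := by
    rw [hspan]
    exact finrank_span_singleton hv₀0
  exact ⟨lam, hlam, hrank, hconc3⟩
end
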